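/- Let φ ∈ (0, 1/2) and let f(ω) = |1 − e^{√(−1)ω}|^{−2φ} f*(ω), where f* : [−π,π] → ℝ is positive, even, continuous, twice differentiable on [−π,0) ∪ (0,π] with |(f*)''(ω)| ≤ C|ω|^{−2} for ω ≠ 0. Then there exists a constant C' > 0 such that for all integers k ≥ 0, |(1/2π) ∫_{−π}^{π} cos(kω) f(ω) dω| ≤ C' (1 + k)^{−(1−2φ)}. In particular, the Toeplitz matrix G with entries G(i,j) = (1/2π)∫_{−π}^{π} cos(|i−j|ω) f(ω) dω satisfies |G(i,j)| ≤ C'(1 + |i−j|)^{−(1−2φ)}. -/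

import Mathlib

/-- The spectral density of a long-memory process with memory parameter `φ`:
`f(ω) = |1 − e^{iω}|^{−2φ} f*(ω)`. -/
noncomputable def lmSpectral (φ : ℝ) (fstar : ℝ → ℝ) (ω : ℝ) : ℝ :=
  ‖1 - Complex.exp (Complex.I * (ω : ℂ))‖ ^ (-(2 * φ)) * fstar ω

open Real MeasureTheory intervalIntegral Set


lemma aux_abs (ω : ℝ) : ‖1 - Complex.exp (Complex.I * ω)‖ = 2 * |Real.sin (ω/2)| := by
  have h : (1 : ℂ) - Complex.exp (Complex.I * ω) = Complex.mk (1 - Real.cos ω) (-Real.sin ω) := by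
    rw [mul_comm, Complex.exp_mul_I]
    apply Complex.ext <;>
      simp [← Complex.ofReal_cos, ← Complex.ofReal_sin]
  rw [h, Complex.norm_def, Complex.normSq_mk]
  have hc : Real.cos ω = 1 - 2 * Real.sin (ω/2)^2 := by
    have := Real.cos_two_mul' (ω/2)
    have h2 : 2 * (ω/2) = ω := by ring
    rw [h2] at this
    have hp := Real.sin_sq_add_cos_sq (ω/2)
    nlinarith
  have h2 : (1 - Real.cos ω) * (1 - Real.cos ω) + (-Real.sin ω) * (-Real.sin ω)
      = (2 * |Real.sin (ω/2)|)^2 := by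
    have hp := Real.sin_sq_add_cos_sq ω
    have habs : |Real.sin (ω/2)|^2 = Real.sin (ω/2)^2 := sq_abs _
    nlinarith
  rw [h2, Real.sqrt_sq (by positivity)]

lemma aux_abs_even (ω : ℝ) :
    ‖1 - Complex.exp (Complex.I * ((-ω : ℝ) : ℂ))‖ =
    ‖1 - Complex.exp (Complex.I * (ω : ℂ))‖ := by
  rw [aux_abs, aux_abs]
  rw [show (-ω)/2 = -(ω/2) by ring, Real.sin_neg, abs_neg]

lemma aux_d1 (C : ℝ) (hC : 0 < C) (d1 d2 : ℝ → ℝ)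
    (hd2 : ∀ ω ∈ Set.Icc (-π) π \ {0}, HasDerivWithinAt d1 (d2 ω) (Set.Icc (-π) π \ {0}) ω)
    (hbd2 : ∀ ω ∈ Set.Icc (-π) π \ {0}, |d2 ω| ≤ C * |ω| ^ (-(2:ℝ))) :
    ∀ ω ∈ Set.Ioc 0 π, |d1 ω| ≤ (π * |d1 π| + C) / ω := by
  have hπ : (0:ℝ) < π := Real.pi_pos
  have hsub : Set.Ioc 0 π ⊆ Set.Icc (-π) π \ {0} := by
    intro x hx
    exact ⟨⟨by linarith [hx.1], hx.2⟩, by simp [hx.1.ne']⟩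
  have hopen : Set.Ioo 0 π ⊆ Set.Icc (-π) π \ {0} := fun x hx =>
    hsub ⟨hx.1, hx.2.le⟩
  have hda : ∀ x ∈ Set.Ioo 0 π, HasDerivAt d1 (d2 x) x := by
    intro x hx
    exact (hd2 x (hopen hx)).hasDerivAt
      (Filter.mem_of_superset (isOpen_Ioo.mem_nhds hx) hopen)
  intro ω hω
  rcases eq_or_lt_of_le hω.2 with heq | hlt
  · rw [heq, le_div_iff₀ hπ]
    nlinarith [abs_nonneg (d1 π)]
  · -- ω < π
    have hω0 : 0 < ω := hω.1
    -- integrability of d2 on [ω, π]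
    have haeπ : ∀ᵐ x : ℝ ∂(volume.restrict (Set.Ioc ω π)), x ≠ π := by
      apply ae_restrict_of_ae
      rw [ae_iff]
      have : {x : ℝ | ¬ x ≠ π} = {π} := by ext x; simp
      rw [this]
      exact Real.volume_singleton
    have haemem : ∀ᵐ x : ℝ ∂(volume.restrict (Set.Ioc ω π)), x ∈ Set.Ioc ω π :=
      ae_restrict_mem measurableSet_Ioc
    have hbd2' : ∀ x ∈ Set.Ioc ω π, x ≠ π → |d2 x| ≤ C * ω ^ (-(2:ℝ)) := by
      intro x hx hxπ
      have hx0 : 0 < x := lt_trans hω0 hx.1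
      have h1 := hbd2 x (hsub ⟨lt_trans hω0 hx.1, hx.2⟩)
      rw [abs_of_pos hx0] at h1
      refine h1.trans ?_
      have := Real.rpow_le_rpow_of_nonpos hω0 hx.1.le (by norm_num : -(2:ℝ) ≤ 0)
      exact mul_le_mul_of_nonneg_left this hC.le
    have hderiv_eq : ∀ x ∈ Set.Ioc ω π, x ≠ π → deriv d1 x = d2 x := by
      intro x hx hxπ
      exact (hda x ⟨lt_trans hω0 hx.1, lt_of_le_of_ne hx.2 hxπ⟩).deriv
    have hintderiv : IntegrableOn (deriv d1) (Set.Ioc ω π) volume := by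
      apply Integrable.mono' (g := fun _ => C * ω ^ (-(2:ℝ)))
        (integrableOn_const measure_Ioc_lt_top.ne)
        ((measurable_deriv d1).aestronglyMeasurable.restrict)
      filter_upwards [haeπ, haemem] with x hxπ hxmem
      rw [Real.norm_eq_abs, hderiv_eq x hxmem hxπ]
      exact hbd2' x hxmem hxπ
    have hintd2 : IntervalIntegrable d2 volume ω π := by
      rw [intervalIntegrable_iff_integrableOn_Ioc_of_le hlt.le]
      apply hintderiv.congr_fun_ae
      filter_upwards [haeπ, haemem] with x hxπ hxmem
      exact hderiv_eq x hxmem hxπ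
    have hcontd1 : ContinuousOn d1 (Set.Icc ω π) := by
      intro x hx
      have hxs : x ∈ Set.Icc (-π) π \ {0} := hsub ⟨lt_of_lt_of_le hω0 hx.1, hx.2⟩
      exact ((hd2 x hxs).continuousWithinAt).mono
        (fun y hy => hsub ⟨lt_of_lt_of_le hω0 hy.1, hy.2⟩)
    have hFTC : ∫ x in ω..π, d2 x = d1 π - d1 ω := by
      apply integral_eq_sub_of_hasDeriv_right_of_le hlt.le hcontd1 ?_ hintd2
      intro x hx
      exact (hda x ⟨lt_trans hω0 hx.1, hx.2⟩).hasDerivWithinAt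
    have hrint : IntervalIntegrable (fun x : ℝ => C * x ^ (-(2:ℝ))) volume ω π := by
      apply IntervalIntegrable.const_mul
      apply intervalIntegrable_rpow (Or.inr ?_)
      rw [Set.uIcc_of_le hlt.le]
      intro h0
      exact absurd h0.1 (not_le.2 hω0)
    have hbint : |∫ x in ω..π, d2 x| ≤ |∫ x in ω..π, C * x ^ (-(2:ℝ))| := by
      rw [show |∫ x in ω..π, d2 x| = ‖∫ x in ω..π, d2 x‖ from (Real.norm_eq_abs _).symm]
      apply intervalIntegral.norm_integral_le_abs_of_norm_le ?_ hrint
      rw [Set.uIoc_of_le hlt.le]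
      filter_upwards [ae_restrict_mem measurableSet_Ioc] with x hx
      rw [Real.norm_eq_abs]
      have hx0 : 0 < x := lt_trans hω0 hx.1
      have h1 := hbd2 x (hsub ⟨hx0, hx.2⟩)
      rwa [abs_of_pos hx0] at h1
    have hval : ∫ x in ω..π, C * x ^ (-(2:ℝ)) = C * (ω⁻¹ - π⁻¹) := by
      rw [intervalIntegral.integral_const_mul]
      rw [integral_rpow (Or.inr ⟨by norm_num, by
        rw [Set.uIcc_of_le hlt.le]; intro h0; exact absurd h0.1 (not_le.2 hω0)⟩)]
      norm_num [Real.rpow_neg_one]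
      left; ring
    have hpos2 : C * (ω⁻¹ - π⁻¹) ≤ C * ω⁻¹ := by
      apply mul_le_mul_of_nonneg_left ?_ hC.le
      have : 0 ≤ π⁻¹ := by positivity
      linarith
    have habs : |∫ x in ω..π, C * x ^ (-(2:ℝ))| = C * (ω⁻¹ - π⁻¹) := by
      rw [hval, abs_of_nonneg]
      have h1 : π⁻¹ ≤ ω⁻¹ := inv_anti₀ hω0 hlt.le
      have h2 : (0:ℝ) ≤ ω⁻¹ - π⁻¹ := by linarith
      exact mul_nonneg hC.le h2
    have hmain : |d1 ω| ≤ |d1 π| + C * ω⁻¹ := by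
      have h1 : d1 ω = d1 π - ∫ x in ω..π, d2 x := by rw [hFTC]; ring
      rw [h1]
      calc |d1 π - ∫ x in ω..π, d2 x| ≤ |d1 π| + |∫ x in ω..π, d2 x| := abs_sub _ _
        _ ≤ |d1 π| + C * (ω⁻¹ - π⁻¹) := by rw [← habs]; linarith [hbint]
        _ ≤ |d1 π| + C * ω⁻¹ := by linarith [hpos2]
    rw [le_div_iff₀ hω0]
    have hinv : ω⁻¹ * ω = 1 := inv_mul_cancel₀ hω0.ne'
    have h2 : |d1 ω| * ω ≤ (|d1 π| + C * ω⁻¹) * ω :=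
      mul_le_mul_of_nonneg_right hmain hω0.le
    have h3 : (|d1 π| + C * ω⁻¹) * ω = |d1 π| * ω + C := by
      field_simp
    nlinarith [abs_nonneg (d1 π), hω.2, hω0]

set_option maxHeartbeats 1600000 in
/-- Let `φ ∈ (0,1/2)` and `f(ω) = |1 − e^{iω}|^{−2φ} f*(ω)` with `f*`
positive, even, continuous, twice differentiable off `0` and `|(f*)''(ω)| ≤ C|ω|^{−2}`.
Then there is `C' > 0` with `|(1/2π) ∫_{−π}^{π} cos(kω) f(ω) dω| ≤ C' (1+k)^{−(1−2φ)}` for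
all `k ≥ 0`; in particular the Toeplitz matrix `G(i,j) = (1/2π)∫ cos(|i−j|ω) f(ω) dω`
satisfies `|G(i,j)| ≤ C' (1+|i−j|)^{−(1−2φ)}`. -/
theorem stmt_9 (φ C : ℝ) (hφ1 : 0 < φ) (hφ2 : φ < 1 / 2) (hC : 0 < C)
    (fstar d1 d2 : ℝ → ℝ)
    (hpos : ∀ ω ∈ Set.Icc (-Real.pi) Real.pi, 0 < fstar ω)
    (heven : ∀ ω ∈ Set.Icc (-Real.pi) Real.pi, fstar (-ω) = fstar ω)
    (hcont : ContinuousOn fstar (Set.Icc (-Real.pi) Real.pi))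
    (hd1 : ∀ ω ∈ Set.Icc (-Real.pi) Real.pi \ {0},
      HasDerivWithinAt fstar (d1 ω) (Set.Icc (-Real.pi) Real.pi \ {0}) ω)
    (hd2 : ∀ ω ∈ Set.Icc (-Real.pi) Real.pi \ {0},
      HasDerivWithinAt d1 (d2 ω) (Set.Icc (-Real.pi) Real.pi \ {0}) ω)
    (hbd2 : ∀ ω ∈ Set.Icc (-Real.pi) Real.pi \ {0}, |d2 ω| ≤ C * |ω| ^ (-(2 : ℝ))) :
    ∃ C' > 0,
      (∀ k : ℕ,
        |(1 / (2 * Real.pi)) *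
            ∫ ω in (-Real.pi)..Real.pi, Real.cos ((k : ℝ) * ω) * lmSpectral φ fstar ω|
          ≤ C' * (1 + (k : ℝ)) ^ (-(1 - 2 * φ))) ∧
      (∀ (p : ℕ) (i j : Fin p),
        |(1 / (2 * Real.pi)) *
            ∫ ω in (-Real.pi)..Real.pi,
              Real.cos (|((i : ℕ) : ℝ) - ((j : ℕ) : ℝ)| * ω) * lmSpectral φ fstar ω|
          ≤ C' * (1 + |((i : ℕ) : ℝ) - ((j : ℕ) : ℝ)|) ^ (-(1 - 2 * φ))) := by
  have hπ : (0:ℝ) < π := Real.pi_pos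
  have hπ1 : (1:ℝ) < π := by linarith [Real.pi_gt_three]
  set g : ℝ → ℝ := lmSpectral φ fstar with hgdef
  -- membership helpers
  have hsub : Set.Ioc 0 π ⊆ Set.Icc (-π) π \ {0} := by
    intro x hx; exact ⟨⟨by linarith [hx.1], hx.2⟩, by simp [hx.1.ne']⟩
  have hopen : Set.Ioo 0 π ⊆ Set.Icc (-π) π \ {0} := fun x hx => hsub ⟨hx.1, hx.2.le⟩
  have hIcc0 : Set.Icc (0:ℝ) π ⊆ Set.Icc (-π) π := fun x hx => ⟨by linarith [hx.1], hx.2⟩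
  -- max of fstar
  obtain ⟨xF, hxF, hmaxF⟩ := isCompact_Icc.exists_isMaxOn
    (⟨0, by constructor <;> linarith⟩ : (Set.Icc (-π) π).Nonempty) hcont
  set F : ℝ := fstar xF with hFdef
  have hF0 : 0 < F := hpos xF hxF
  have hFb : ∀ y ∈ Set.Icc (-π) π, fstar y ≤ F := fun y hy => hmaxF hy
  -- constants
  set Mc : ℝ := (2/π) ^ (-(2*φ)) with hMcdef
  have hMc : 0 < Mc := Real.rpow_pos_of_pos (by positivity) _
  set Mc' : ℝ := (2/π) ^ (-(2*φ) - 1) with hMc'def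
  have hMc' : 0 < Mc' := Real.rpow_pos_of_pos (by positivity) _
  set D1 : ℝ := π * |d1 π| + C with hD1def
  have hD1 : 0 < D1 := by
    have := abs_nonneg (d1 π); positivity
  set M : ℝ := Mc * F with hMdef
  have hM : 0 < M := by positivity
  set E : ℝ := 2*φ*Mc'*F + Mc*D1 with hEdef
  have hE : 0 < E := by positivity
  have h2φ : 0 < 1 - 2*φ := by linarith
  -- the auxiliary functions
  set H : ℝ → ℝ := fun ω => (2 * Real.sin (ω/2)) ^ (-(2*φ)) with hHdef
  set H' : ℝ → ℝ := fun ω =>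
    Real.cos (ω/2) * (-(2*φ)) * (2*Real.sin (ω/2)) ^ (-(2*φ) - 1) with hH'def
  set g' : ℝ → ℝ := fun ω => H' ω * fstar ω + H ω * d1 ω with hg'def
  -- sin positivity and Jordan bound
  have hsin : ∀ ω ∈ Set.Ioc (0:ℝ) π, 0 < Real.sin (ω/2) := by
    intro ω hω
    apply Real.sin_pos_of_pos_of_lt_pi (by linarith [hω.1])
    have := hω.2; linarith
  have hjordan : ∀ ω ∈ Set.Ioc (0:ℝ) π, (2/π) * ω ≤ 2 * Real.sin (ω/2) := by
    intro ω hω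
    have h := Real.mul_le_sin (x := ω/2) (by linarith [hω.1]) (by linarith [hω.2])
    have : 2/π * (ω/2) = (2/π) * ω / 2 := by ring
    linarith [h]
  have hbase : ∀ ω ∈ Set.Ioc (0:ℝ) π, (0:ℝ) < (2/π) * ω := by
    intro ω hω; have := hω.1; positivity
  -- identification g = H * fstar on [0, π]
  have hg_eq : ∀ ω ∈ Set.Icc (0:ℝ) π, g ω = H ω * fstar ω := by
    intro ω hω
    have hs : |Real.sin (ω/2)| = Real.sin (ω/2) := by
      rw [abs_of_nonneg]
      apply Real.sin_nonneg_of_nonneg_of_le_pi (by linarith [hω.1]) (by linarith [hω.2])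
    show lmSpectral φ fstar ω = H ω * fstar ω
    unfold lmSpectral
    rw [aux_abs, hs]
  -- pointwise bounds
  have hHpos : ∀ ω ∈ Set.Ioc (0:ℝ) π, 0 < H ω := by
    intro ω hω
    exact Real.rpow_pos_of_pos (by linarith [hsin ω hω]) _
  have hHb : ∀ ω ∈ Set.Ioc (0:ℝ) π, H ω ≤ Mc * ω ^ (-(2*φ)) := by
    intro ω hω
    have h1 : (2 * Real.sin (ω/2)) ^ (-(2*φ)) ≤ ((2/π) * ω) ^ (-(2*φ)) :=
      Real.rpow_le_rpow_of_nonpos (hbase ω hω) (hjordan ω hω) (by linarith)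
    calc H ω ≤ ((2/π) * ω) ^ (-(2*φ)) := h1
      _ = Mc * ω ^ (-(2*φ)) := by
          rw [Real.mul_rpow (by positivity) hω.1.le]
  have hH'b : ∀ ω ∈ Set.Ioc (0:ℝ) π, |H' ω| ≤ 2*φ*Mc' * ω ^ (-(2*φ) - 1) := by
    intro ω hω
    have h1 : (2 * Real.sin (ω/2)) ^ (-(2*φ) - 1) ≤ ((2/π) * ω) ^ (-(2*φ) - 1) :=
      Real.rpow_le_rpow_of_nonpos (hbase ω hω) (hjordan ω hω) (by linarith)
    have h2 : ((2/π) * ω) ^ (-(2*φ) - 1) = Mc' * ω ^ (-(2*φ) - 1) := by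
      rw [Real.mul_rpow (by positivity) hω.1.le]
    have hrp : (0:ℝ) < (2 * Real.sin (ω/2)) ^ (-(2*φ) - 1) :=
      Real.rpow_pos_of_pos (by linarith [hsin ω hω]) _
    have hrw : |H' ω| = |Real.cos (ω/2)| * (2*φ) * (2 * Real.sin (ω/2)) ^ (-(2*φ) - 1) := by
      rw [hH'def]
      rw [abs_mul, abs_mul, abs_neg, abs_of_pos (by linarith : (0:ℝ) < 2*φ),
        abs_of_pos hrp]
    rw [hrw]
    have hcos1 : |Real.cos (ω/2)| ≤ 1 := Real.abs_cos_le_one _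
    calc |Real.cos (ω/2)| * (2*φ) * (2 * Real.sin (ω/2)) ^ (-(2*φ) - 1)
        ≤ 1 * (2*φ) * ((2/π) * ω) ^ (-(2*φ) - 1) := by
          apply mul_le_mul ?_ h1 hrp.le (by positivity)
          apply mul_le_mul_of_nonneg_right hcos1 (by linarith)
      _ = 2*φ*Mc' * ω ^ (-(2*φ) - 1) := by rw [h2]; ring
  have hgb : ∀ ω ∈ Set.Ioc (0:ℝ) π, |g ω| ≤ M * ω ^ (-(2*φ)) := by
    intro ω hω
    rw [hg_eq ω ⟨hω.1.le, hω.2⟩]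
    have hfω : 0 < fstar ω := hpos ω (hsub hω).1
    rw [abs_of_pos (mul_pos (hHpos ω hω) hfω)]
    calc H ω * fstar ω ≤ (Mc * ω ^ (-(2*φ))) * F := by
          apply mul_le_mul (hHb ω hω) (hFb ω (hsub hω).1) hfω.le
          exact mul_nonneg hMc.le (Real.rpow_nonneg hω.1.le _)
      _ = M * ω ^ (-(2*φ)) := by rw [hMdef]; ring
  -- d1 bound
  have hd1b : ∀ ω ∈ Set.Ioc (0:ℝ) π, |d1 ω| ≤ D1 / ω := aux_d1 C hC d1 d2 hd2 hbd2
  -- g' bound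
  have hg'b : ∀ ω ∈ Set.Ioc (0:ℝ) π, |g' ω| ≤ E * ω ^ (-(2*φ) - 1) := by
    intro ω hω
    have hω0 : 0 < ω := hω.1
    have hf : |fstar ω| ≤ F := by
      rw [abs_of_pos (hpos ω (hsub hω).1)]; exact hFb ω (hsub hω).1
    have h1 : |H' ω * fstar ω| ≤ (2*φ*Mc' * ω ^ (-(2*φ) - 1)) * F := by
      rw [abs_mul]
      apply mul_le_mul (hH'b ω hω) hf (abs_nonneg _) (by positivity)
    have hsplit : ω ^ (-(2*φ) - 1) = ω ^ (-(2*φ)) * ω⁻¹ := by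
      rw [show -(2*φ) - 1 = -(2*φ) + (-1) by ring, Real.rpow_add hω0, Real.rpow_neg_one]
    have h2 : |H ω * d1 ω| ≤ (Mc * D1) * ω ^ (-(2*φ) - 1) := by
      rw [abs_mul, abs_of_pos (hHpos ω hω)]
      calc H ω * |d1 ω| ≤ (Mc * ω ^ (-(2*φ))) * (D1 / ω) := by
            apply mul_le_mul (hHb ω hω) (hd1b ω hω) (abs_nonneg _) (by positivity)
        _ = (Mc * D1) * ω ^ (-(2*φ) - 1) := by
            rw [hsplit]; field_simp
    calc |g' ω| ≤ |H' ω * fstar ω| + |H ω * d1 ω| := abs_add_le _ _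
      _ ≤ (2*φ*Mc' * ω ^ (-(2*φ) - 1)) * F + (Mc * D1) * ω ^ (-(2*φ) - 1) := by
          linarith [h1, h2]
      _ = E * ω ^ (-(2*φ) - 1) := by rw [hEdef]; ring
  -- continuity statements
  have hcontsin : Continuous (fun ω : ℝ => 2 * Real.sin (ω/2)) :=
    continuous_const.mul (Real.continuous_sin.comp (continuous_id.div_const 2))
  have hcontH : ContinuousOn H (Set.Ioc (0:ℝ) π) := by
    apply ContinuousOn.rpow_const hcontsin.continuousOn
    intro x hx
    exact Or.inl (by linarith [hsin x hx])
  have hcontH' : ContinuousOn H' (Set.Ioc (0:ℝ) π) := by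
    apply ContinuousOn.mul
    · exact ((Real.continuous_cos.comp (continuous_id.div_const 2)).mul
        continuous_const).continuousOn
    · apply ContinuousOn.rpow_const hcontsin.continuousOn
      intro x hx
      exact Or.inl (by linarith [hsin x hx])
  have hcontfs : ContinuousOn fstar (Set.Ioc (0:ℝ) π) :=
    hcont.mono (fun x hx => (hsub hx).1)
  have hcontg : ContinuousOn g (Set.Ioc (0:ℝ) π) := by
    apply ContinuousOn.congr (hcontH.mul hcontfs)
    intro x hx
    exact hg_eq x ⟨hx.1.le, hx.2⟩
  have hcontd1 : ContinuousOn d1 (Set.Ioc (0:ℝ) π) := by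
    intro x hx
    exact ((hd2 x (hsub hx)).continuousWithinAt).mono (fun y hy => hsub hy)
  have hcontg' : ContinuousOn g' (Set.Ioc (0:ℝ) π) :=
    (hcontH'.mul hcontfs).add (hcontH.mul hcontd1)
  -- integrability of the dominator
  have hdomint : ∀ b c : ℝ, IntervalIntegrable (fun x : ℝ => M * x ^ (-(2*φ))) volume b c := by
    intro b c
    exact (intervalIntegrable_rpow' (by linarith)).const_mul M
  -- master integrability
  have hmaster : ∀ r : ℝ, IntervalIntegrable (fun ω => Real.cos (r*ω) * g ω) volume 0 π := by
    intro r
    rw [intervalIntegrable_iff_integrableOn_Ioc_of_le hπ.le]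
    have hmeas : AEStronglyMeasurable (fun ω => Real.cos (r*ω) * g ω)
        (volume.restrict (Set.Ioc 0 π)) := by
      apply ContinuousOn.aestronglyMeasurable ?_ measurableSet_Ioc
      exact ((Real.continuous_cos.comp (continuous_const.mul continuous_id)).continuousOn).mul
        hcontg
    apply Integrable.mono'
      ((intervalIntegrable_iff_integrableOn_Ioc_of_le hπ.le).1 (hdomint 0 π)) hmeas
    filter_upwards [ae_restrict_mem measurableSet_Ioc] with x hx
    rw [Real.norm_eq_abs, abs_mul]
    exact le_trans (mul_le_of_le_one_left (abs_nonneg _) (Real.abs_cos_le_one _)) (hgb x hx)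
  have hmaster' : ∀ r b c : ℝ, 0 ≤ b → c ≤ π → b ≤ c →
      IntervalIntegrable (fun ω => Real.cos (r*ω) * g ω) volume b c := by
    intro r b c hb hc hbc
    apply (hmaster r).mono_set
    rw [Set.uIcc_of_le hbc, Set.uIcc_of_le hπ.le]
    exact Set.Icc_subset_Icc hb hc
  -- symmetry: reduce to [0, π]
  have hsym : ∀ r : ℝ, (∫ ω in (-π)..π, Real.cos (r * ω) * g ω)
      = 2 * ∫ ω in (0:ℝ)..π, Real.cos (r * ω) * g ω := by
    intro r
    have heqon : Set.EqOn (fun x : ℝ => Real.cos (r * (-x)) * g (-x))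
        (fun x : ℝ => Real.cos (r * x) * g x) (Set.uIcc 0 π) := by
      intro x hx
      rw [Set.uIcc_of_le hπ.le] at hx
      have hxm : x ∈ Set.Icc (-π) π := hIcc0 hx
      have hg_even : g (-x) = g x := by
        show lmSpectral φ fstar (-x) = lmSpectral φ fstar x
        unfold lmSpectral
        rw [aux_abs_even x, heven x hxm]
      simp only
      rw [mul_neg, Real.cos_neg, hg_even]
    have hint_neg : IntervalIntegrable (fun x : ℝ => Real.cos (r * (-x)) * g (-x))
        volume 0 π := by
      rw [intervalIntegrable_iff_integrableOn_Ioc_of_le hπ.le]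
      apply IntegrableOn.congr_fun
        ((intervalIntegrable_iff_integrableOn_Ioc_of_le hπ.le).1 (hmaster r))
      · intro x hx
        exact (heqon (by rw [Set.uIcc_of_le hπ.le]; exact ⟨hx.1.le, hx.2⟩)).symm
      · exact measurableSet_Ioc
    have hint_left : IntervalIntegrable (fun ω => Real.cos (r * ω) * g ω) volume (-π) 0 := by
      have h := (IntervalIntegrable.iff_comp_neg (f := fun x : ℝ => Real.cos (r * (-x)) * g (-x)) (a := 0) (b := π)).1 hint_neg
      simp only [neg_neg, neg_zero] at h
      exact h.symm
    have hadd := intervalIntegral.integral_add_adjacent_intervals hint_left (hmaster r)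
    have hleft : (∫ ω in (-π)..(0:ℝ), Real.cos (r * ω) * g ω)
        = ∫ ω in (0:ℝ)..π, Real.cos (r * ω) * g ω := by
      have h1 : (∫ x in (0:ℝ)..π, Real.cos (r * (-x)) * g (-x))
          = ∫ x in (-π)..(-0:ℝ), Real.cos (r * x) * g x :=
        intervalIntegral.integral_comp_neg (fun x => Real.cos (r * x) * g x)
      rw [neg_zero] at h1
      rw [← h1, intervalIntegral.integral_congr heqon]
    rw [← hadd, hleft]
    ring
  -- key estimate on [0, π]
  set K : ℝ := M*π^(1-2*φ)/(1-2*φ) + M/(1-2*φ) + 2*(2*M + E/(2*φ)) with hKdef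
  have hrpowπ : (0:ℝ) < π^(1-2*φ) := Real.rpow_pos_of_pos hπ _
  have hK0 : 0 < K := by
    have h1 : 0 < M*π^(1-2*φ)/(1-2*φ) := div_pos (mul_pos hM hrpowπ) h2φ
    have h2 : 0 < M/(1-2*φ) := div_pos hM h2φ
    have h3 : 0 < 2*(2*M + E/(2*φ)) := by
      have : 0 < E/(2*φ) := div_pos hE (by linarith)
      linarith
    rw [hKdef]; linarith
  have hkey : ∀ k : ℕ, |∫ ω in (0:ℝ)..π, Real.cos ((k:ℝ) * ω) * g ω|
      ≤ K * (1 + (k:ℝ)) ^ (-(1 - 2*φ)) := by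
    intro k
    rcases Nat.eq_zero_or_pos k with hk0 | hk1
    · -- k = 0
      subst hk0
      have h1 : |∫ ω in (0:ℝ)..π, Real.cos (((0:ℕ):ℝ) * ω) * g ω|
          ≤ |∫ ω in (0:ℝ)..π, M * ω ^ (-(2*φ))| := by
        rw [show |∫ ω in (0:ℝ)..π, Real.cos (((0:ℕ):ℝ) * ω) * g ω|
          = ‖∫ ω in (0:ℝ)..π, Real.cos (((0:ℕ):ℝ) * ω) * g ω‖ from (Real.norm_eq_abs _).symm]
        apply intervalIntegral.norm_integral_le_abs_of_norm_le ?_ (hdomint 0 π)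
        rw [Set.uIoc_of_le hπ.le]
        filter_upwards [ae_restrict_mem measurableSet_Ioc] with x hx
        rw [Real.norm_eq_abs, abs_mul]
        exact le_trans (mul_le_of_le_one_left (abs_nonneg _) (Real.abs_cos_le_one _)) (hgb x hx)
      have h2 : ∫ ω in (0:ℝ)..π, M * ω ^ (-(2*φ)) = M * (π^(1-2*φ)/(1-2*φ)) := by
        rw [intervalIntegral.integral_const_mul, integral_rpow (Or.inl (by linarith))]
        rw [show (-(2*φ) + 1 : ℝ) = 1-2*φ by ring,
          Real.zero_rpow (by linarith : (1-2*φ : ℝ) ≠ 0)]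
        ring
      have h3 : |∫ ω in (0:ℝ)..π, M * ω ^ (-(2*φ))| = M * (π^(1-2*φ)/(1-2*φ)) := by
        rw [h2, abs_of_pos (by positivity)]
      rw [h3] at h1
      have h7 : M * (π^(1-2*φ)/(1-2*φ)) ≤ K := by
        rw [hKdef]
        have h4 : 0 < M/(1-2*φ) := div_pos hM h2φ
        have h5 : 0 < E/(2*φ) := div_pos hE (by linarith)
        have h6 : M * (π^(1-2*φ)/(1-2*φ)) = M*π^(1-2*φ)/(1-2*φ) := by ring
        linarith
      have h8 : (1 + ((0:ℕ):ℝ)) ^ (-(1-2*φ)) = 1 := by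
        rw [Nat.cast_zero, add_zero, Real.one_rpow]
      rw [h8, mul_one]
      exact h1.trans h7
    · -- k ≥ 1
      set kr : ℝ := (k:ℝ) with hkrdef
      have hkr1 : (1:ℝ) ≤ kr := by rw [hkrdef]; exact_mod_cast hk1
      have hkr0 : (0:ℝ) < kr := by linarith
      have h1kr : (0:ℝ) < 1 + kr := by linarith
      set a : ℝ := (1 + kr)⁻¹ with hadef
      have ha0 : 0 < a := by positivity
      have ha2 : a ≤ 1/2 := by
        rw [hadef]
        rw [inv_le_comm₀ (by linarith) (by norm_num)]
        norm_num; linarith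
      have haπ : a < π := by linarith
      have hIccsub : Set.Icc a π ⊆ Set.Ioc 0 π := fun x hx => ⟨lt_of_lt_of_le ha0 hx.1, hx.2⟩
      -- near part
      have hnear : |∫ ω in (0:ℝ)..a, Real.cos (kr * ω) * g ω|
          ≤ M/(1-2*φ) * (1+kr) ^ (-(1-2*φ)) := by
        have h1 : |∫ ω in (0:ℝ)..a, Real.cos (kr * ω) * g ω|
            ≤ |∫ ω in (0:ℝ)..a, M * ω ^ (-(2*φ))| := by
          rw [show |∫ ω in (0:ℝ)..a, Real.cos (kr * ω) * g ω|
            = ‖∫ ω in (0:ℝ)..a, Real.cos (kr * ω) * g ω‖ from (Real.norm_eq_abs _).symm]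
          apply intervalIntegral.norm_integral_le_abs_of_norm_le ?_ (hdomint 0 a)
          rw [Set.uIoc_of_le ha0.le]
          filter_upwards [ae_restrict_mem measurableSet_Ioc] with x hx
          rw [Real.norm_eq_abs, abs_mul]
          refine le_trans (mul_le_of_le_one_left (abs_nonneg _) (Real.abs_cos_le_one _))
            (hgb x ⟨hx.1, le_trans hx.2 haπ.le⟩)
        have h2 : ∫ ω in (0:ℝ)..a, M * ω ^ (-(2*φ)) = M * (a^(1-2*φ)/(1-2*φ)) := by
          rw [intervalIntegral.integral_const_mul, integral_rpow (Or.inl (by linarith))]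
          rw [show (-(2*φ) + 1 : ℝ) = 1-2*φ by ring,
            Real.zero_rpow (by linarith : (1-2*φ : ℝ) ≠ 0)]
          ring
        have ha_exp : a^(1-2*φ) = (1+kr) ^ (-(1-2*φ)) := by
          rw [hadef, Real.inv_rpow (by linarith), ← Real.rpow_neg (by linarith)]
        have h3 : |∫ ω in (0:ℝ)..a, M * ω ^ (-(2*φ))| = M/(1-2*φ) * (1+kr) ^ (-(1-2*φ)) := by
          rw [h2, abs_of_pos (by positivity), ha_exp]; ring
        rw [h3] at h1; exact h1
      -- far part : integration by parts
      have hDeriv : ∀ x ∈ Set.Ioo a π,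
          HasDerivAt (fun ω => Real.sin (kr*ω)/kr * g ω)
            (Real.cos (kr*x) * g x + Real.sin (kr*x)/kr * g' x) x := by
        intro x hx
        have hx0π : x ∈ Set.Ioo 0 π := ⟨lt_trans ha0 hx.1, hx.2⟩
        have hsin' : HasDerivAt (fun y => Real.sin (kr*y)/kr) (Real.cos (kr*x)) x := by
          have h := (((hasDerivAt_id x).const_mul kr).sin).div_const kr
          refine h.congr_deriv ?_
          simp only [id_eq]
          field_simp
        have hfs : HasDerivAt fstar (d1 x) x :=
          (hd1 x (hopen hx0π)).hasDerivAt
            (Filter.mem_of_superset (isOpen_Ioo.mem_nhds hx0π) hopen)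
        have hu : HasDerivAt (fun y : ℝ => 2 * Real.sin (y/2)) (Real.cos (x/2)) x := by
          have h := (((hasDerivAt_id x).div_const 2).sin).const_mul 2
          refine h.congr_deriv ?_
          simp only [id_eq]
          ring
        have hsx : (0:ℝ) < Real.sin (x/2) := hsin x ⟨hx0π.1, hx0π.2.le⟩
        have hHd : HasDerivAt H (H' x) x :=
          hu.rpow_const (p := -(2*φ)) (Or.inl (by linarith : (2 * Real.sin (x/2)) ≠ 0))
        have hgx : HasDerivAt g (g' x) x := by
          have hprod := hHd.mul hfs
          apply hprod.congr_of_eventuallyEq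
          filter_upwards [isOpen_Ioo.mem_nhds hx0π] with y hy
          exact hg_eq y ⟨hy.1.le, hy.2.le⟩
        exact hsin'.mul hgx
      have hcontsinkr : Continuous (fun y : ℝ => Real.sin (kr*y)/kr) :=
        (Real.continuous_sin.comp (continuous_const.mul continuous_id)).div_const kr
      have hcontP : ContinuousOn (fun ω => Real.sin (kr*ω)/kr * g ω) (Set.Icc a π) :=
        hcontsinkr.continuousOn.mul (hcontg.mono hIccsub)
      have hsinint : IntervalIntegrable (fun ω => Real.sin (kr*ω)/kr * g' ω) volume a π := by
        apply ContinuousOn.intervalIntegrable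
        rw [Set.uIcc_of_le haπ.le]
        exact hcontsinkr.continuousOn.mul (hcontg'.mono hIccsub)
      have hcosint : IntervalIntegrable (fun ω => Real.cos (kr*ω) * g ω) volume a π :=
        hmaster' kr a π ha0.le le_rfl haπ.le
      have hQint : IntervalIntegrable
          (fun ω => Real.cos (kr*ω) * g ω + Real.sin (kr*ω)/kr * g' ω) volume a π :=
        hcosint.add hsinint
      have hFTC2 : ∫ x in a..π, (Real.cos (kr*x) * g x + Real.sin (kr*x)/kr * g' x)
          = Real.sin (kr*π)/kr * g π - Real.sin (kr*a)/kr * g a :=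
        integral_eq_sub_of_hasDeriv_right_of_le haπ.le hcontP
          (fun x hx => (hDeriv x hx).hasDerivWithinAt) hQint
      have hQsplit : ∫ x in a..π, (Real.cos (kr*x) * g x + Real.sin (kr*x)/kr * g' x)
          = (∫ x in a..π, Real.cos (kr*x) * g x) + ∫ x in a..π, Real.sin (kr*x)/kr * g' x :=
        intervalIntegral.integral_add hcosint hsinint
      have hIBP : ∫ x in a..π, Real.cos (kr*x) * g x
          = Real.sin (kr*π)/kr * g π - Real.sin (kr*a)/kr * g a
            - ∫ x in a..π, Real.sin (kr*x)/kr * g' x := by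
        rw [← hFTC2, hQsplit]; ring
      -- bounds on the three pieces
      have hrpow_a_pos : (0:ℝ) < a ^ (-(2*φ)) := Real.rpow_pos_of_pos ha0 _
      have hπ_le_a : π ^ (-(2*φ)) ≤ a ^ (-(2*φ)) :=
        Real.rpow_le_rpow_of_nonpos ha0 haπ.le (by linarith)
      have hboundary : ∀ b ∈ Set.Icc a π, |Real.sin (kr*b)/kr * g b|
          ≤ (1/kr) * (M * a ^ (-(2*φ))) := by
        intro b hb
        have hb' : b ∈ Set.Ioc (0:ℝ) π := hIccsub hb
        rw [abs_mul, abs_div]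
        have h1 : |Real.sin (kr*b)|/|kr| ≤ 1/kr := by
          rw [abs_of_pos hkr0]
          exact (div_le_div_iff_of_pos_right hkr0).mpr (Real.abs_sin_le_one _)
        have h2 : |g b| ≤ M * a ^ (-(2*φ)) := by
          refine (hgb b hb').trans ?_
          exact mul_le_mul_of_nonneg_left
            (Real.rpow_le_rpow_of_nonpos ha0 hb.1 (by linarith)) hM.le
        apply mul_le_mul h1 h2 (abs_nonneg _) (one_div_nonneg.mpr hkr0.le)
      have htail : |∫ x in a..π, Real.sin (kr*x)/kr * g' x|
          ≤ (E/kr) * (a ^ (-(2*φ)) / (2*φ)) := by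
        have hbint : IntervalIntegrable (fun t : ℝ => (E/kr) * t ^ (-(2*φ) - 1)) volume a π := by
          apply IntervalIntegrable.const_mul
          apply intervalIntegrable_rpow (Or.inr ?_)
          rw [Set.uIcc_of_le haπ.le]
          intro h0; exact absurd h0.1 (not_le.2 ha0)
        have h1 : |∫ x in a..π, Real.sin (kr*x)/kr * g' x|
            ≤ |∫ t in a..π, (E/kr) * t ^ (-(2*φ) - 1)| := by
          rw [show |∫ x in a..π, Real.sin (kr*x)/kr * g' x|
            = ‖∫ x in a..π, Real.sin (kr*x)/kr * g' x‖ from (Real.norm_eq_abs _).symm]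
          apply intervalIntegral.norm_integral_le_abs_of_norm_le ?_ hbint
          rw [Set.uIoc_of_le haπ.le]
          filter_upwards [ae_restrict_mem measurableSet_Ioc] with t ht
          have htoc : t ∈ Set.Ioc (0:ℝ) π := ⟨lt_trans ha0 ht.1, ht.2⟩
          rw [Real.norm_eq_abs, abs_mul, abs_div, abs_of_pos hkr0]
          have h2 : |Real.sin (kr*t)|/kr ≤ 1/kr :=
            (div_le_div_iff_of_pos_right hkr0).mpr (Real.abs_sin_le_one _)
          calc |Real.sin (kr*t)|/kr * |g' t| ≤ (1/kr) * (E * t ^ (-(2*φ) - 1)) := by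
                apply mul_le_mul h2 (hg'b t htoc) (abs_nonneg _) (one_div_nonneg.mpr hkr0.le)
            _ = (E/kr) * t ^ (-(2*φ) - 1) := by ring
        have h3 : ∫ t in a..π, (E/kr) * t ^ (-(2*φ) - 1)
            = (E/kr) * ((a ^ (-(2*φ)) - π ^ (-(2*φ))) / (2*φ)) := by
          rw [intervalIntegral.integral_const_mul, integral_rpow (Or.inr ⟨?_, ?_⟩)]
          · rw [show (-(2*φ) - 1 + 1 : ℝ) = -(2*φ) by ring]
            field_simp
            ring
          · intro heq
            have : φ = 0 := by linarith [heq]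
            exact absurd this hφ1.ne'
          · rw [Set.uIcc_of_le haπ.le]
            intro h0; exact absurd h0.1 (not_le.2 ha0)
        have h4 : |∫ t in a..π, (E/kr) * t ^ (-(2*φ) - 1)|
            ≤ (E/kr) * (a ^ (-(2*φ)) / (2*φ)) := by
          rw [h3, abs_of_nonneg]
          · apply mul_le_mul_of_nonneg_left ?_ (div_nonneg hE.le hkr0.le)
            apply (div_le_div_iff_of_pos_right (by linarith : (0:ℝ) < 2*φ)).mpr
            linarith [Real.rpow_pos_of_pos hπ (-(2*φ))]
          · apply mul_nonneg (by positivity)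
            apply div_nonneg ?_ (by linarith)
            linarith [hπ_le_a]
        exact h1.trans h4
      have hfar : |∫ x in a..π, Real.cos (kr*x) * g x|
          ≤ (2*M + E/(2*φ)) * ((1/kr) * a ^ (-(2*φ))) := by
        rw [hIBP]
        have hb1 := hboundary π ⟨haπ.le, le_rfl⟩
        have hb2 := hboundary a ⟨le_rfl, haπ.le⟩
        calc |Real.sin (kr*π)/kr * g π - Real.sin (kr*a)/kr * g a
              - ∫ x in a..π, Real.sin (kr*x)/kr * g' x|
            ≤ |Real.sin (kr*π)/kr * g π| + |Real.sin (kr*a)/kr * g a|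
              + |∫ x in a..π, Real.sin (kr*x)/kr * g' x| := by
              have := abs_sub (Real.sin (kr*π)/kr * g π - Real.sin (kr*a)/kr * g a)
                (∫ x in a..π, Real.sin (kr*x)/kr * g' x)
              have h2 := abs_sub (Real.sin (kr*π)/kr * g π) (Real.sin (kr*a)/kr * g a)
              linarith
          _ ≤ (1/kr) * (M * a ^ (-(2*φ))) + (1/kr) * (M * a ^ (-(2*φ)))
              + (E/kr) * (a ^ (-(2*φ)) / (2*φ)) := by linarith [htail]
          _ = (2*M + E/(2*φ)) * ((1/kr) * a ^ (-(2*φ))) := by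
              field_simp
              ring
      -- convert a ^ (-(2φ)) and 1/kr
      have haexp : a ^ (-(2*φ)) = (1+kr) ^ (2*φ) := by
        rw [hadef, Real.inv_rpow (by linarith), Real.rpow_neg (by linarith), inv_inv]
      have hkr2 : (1/kr) * a ^ (-(2*φ)) ≤ 2 * (1+kr) ^ (-(1-2*φ)) := by
        rw [haexp]
        have h1 : (1+kr) ^ (2*φ) = (1+kr) ^ (-(1-2*φ)) * (1+kr) := by
          rw [← Real.rpow_add_one (by linarith : (1+kr) ≠ 0) (-(1-2*φ))]
          congr 1
          ring
        rw [h1]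
        have h2 : (0:ℝ) ≤ (1+kr) ^ (-(1-2*φ)) := Real.rpow_nonneg (by linarith) _
        have h3 : (1+kr)/kr ≤ 2 := by
          rw [div_le_iff₀ hkr0]; linarith
        calc (1/kr) * ((1+kr) ^ (-(1-2*φ)) * (1+kr))
            = (1+kr) ^ (-(1-2*φ)) * ((1+kr)/kr) := by ring
          _ ≤ (1+kr) ^ (-(1-2*φ)) * 2 := mul_le_mul_of_nonneg_left h3 h2
          _ = 2 * (1+kr) ^ (-(1-2*φ)) := by ring
      have hfar2 : |∫ x in a..π, Real.cos (kr*x) * g x|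
          ≤ (2*M + E/(2*φ)) * (2 * (1+kr) ^ (-(1-2*φ))) := by
        refine hfar.trans ?_
        apply mul_le_mul_of_nonneg_left hkr2
        have : 0 < E/(2*φ) := div_pos hE (by linarith)
        linarith
      -- combine
      have hsplitI : (∫ ω in (0:ℝ)..π, Real.cos (kr * ω) * g ω)
          = (∫ ω in (0:ℝ)..a, Real.cos (kr * ω) * g ω)
            + ∫ ω in a..π, Real.cos (kr * ω) * g ω :=
        (intervalIntegral.integral_add_adjacent_intervals
          (hmaster' kr 0 a (le_refl 0) haπ.le ha0.le) hcosint).symm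
      have hrpownn : (0:ℝ) ≤ (1+kr) ^ (-(1-2*φ)) := Real.rpow_nonneg (by linarith) _
      calc |∫ ω in (0:ℝ)..π, Real.cos (kr * ω) * g ω|
          ≤ |∫ ω in (0:ℝ)..a, Real.cos (kr * ω) * g ω|
            + |∫ ω in a..π, Real.cos (kr * ω) * g ω| := by
            rw [hsplitI]; exact abs_add_le _ _
        _ ≤ M/(1-2*φ) * (1+kr) ^ (-(1-2*φ))
            + (2*M + E/(2*φ)) * (2 * (1+kr) ^ (-(1-2*φ))) := by linarith [hnear, hfar2]
        _ ≤ K * (1+kr) ^ (-(1-2*φ)) := by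
            rw [hKdef]
            have h1 : (0:ℝ) ≤ M*π^(1-2*φ)/(1-2*φ) := le_of_lt (div_pos (mul_pos hM hrpowπ) h2φ)
            nlinarith [hrpownn]
  -- assemble the final result
  have hC'0 : (0:ℝ) < K/π + 1 := by positivity
  have hmain : ∀ k : ℕ, |1/(2*π) * ∫ ω in (-π)..π, Real.cos ((k:ℝ) * ω) * g ω|
      ≤ (K/π + 1) * (1 + (k:ℝ)) ^ (-(1-2*φ)) := by
    intro k
    rw [hsym ((k:ℝ))]
    have h1 : 1/(2*π) * (2 * ∫ ω in (0:ℝ)..π, Real.cos ((k:ℝ) * ω) * g ω)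
        = (∫ ω in (0:ℝ)..π, Real.cos ((k:ℝ) * ω) * g ω) / π := by
      field_simp
    rw [h1, abs_div, abs_of_pos hπ]
    have h2 := hkey k
    have hrpos : (0:ℝ) < (1 + (k:ℝ)) ^ (-(1-2*φ)) :=
      Real.rpow_pos_of_pos (by positivity) _
    rw [div_le_iff₀ hπ]
    calc |∫ ω in (0:ℝ)..π, Real.cos ((k:ℝ) * ω) * g ω|
        ≤ K * (1 + (k:ℝ)) ^ (-(1-2*φ)) := h2
      _ ≤ ((K/π + 1) * (1 + (k:ℝ)) ^ (-(1-2*φ))) * π := by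
          rw [show ((K/π + 1) * (1 + (k:ℝ)) ^ (-(1-2*φ))) * π
            = (K + π) * (1 + (k:ℝ)) ^ (-(1-2*φ)) by field_simp; try ring]
          apply mul_le_mul_of_nonneg_right ?_ hrpos.le
          linarith
  refine ⟨K/π + 1, hC'0, hmain, ?_⟩
  intro p i j
  rcases le_total ((j : ℕ)) ((i : ℕ)) with h | h
  · have habs : |(((i:ℕ)):ℝ) - (((j:ℕ)):ℝ)| = ((((i:ℕ) - (j:ℕ) : ℕ)):ℝ) := by
      rw [Nat.cast_sub h, abs_of_nonneg]
      rw [sub_nonneg]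
      exact_mod_cast h
    rw [habs]
    exact hmain _
  · have habs : |(((i:ℕ)):ℝ) - (((j:ℕ)):ℝ)| = ((((j:ℕ) - (i:ℕ) : ℕ)):ℝ) := by
      rw [abs_sub_comm, Nat.cast_sub h, abs_of_nonneg]
      rw [sub_nonneg]
      exact_mod_cast h
    rw [habs]
    exact hmain _
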